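/- Fix a hidden configuration h and a visible unit i : V. Then the conditional probability under the joint Boltzmann distribution that visible unit i equals 1 given h is the sigmoid of its input: (∑ over visible configurations v with v i = 1 of P(v,h)) / (∑ over all visible configurations v of P(v,h)) = σ(b i + ∑_j w i j * h j). -/

import Mathlib

/-- RBM: the conditional probability under the joint Boltzmann distribution
that visible unit `i` equals `1` given the hidden configuration `h` is the
sigmoid of its input `b i + ∑ j, w i j * h j`. -/
theorem rbm_visible_conditional_sigmoid
    {V H : Type*} [Fintype V] [Fintype H] [DecidableEq V] [DecidableEq H]
    (w : V → H → ℝ) (b : V → ℝ) (c : H → ℝ)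
    (E : (V → ℝ) → (H → ℝ) → ℝ)
    (hE : ∀ v h, E v h = -(∑ i, b i * v i) - (∑ j, c j * h j) -
      ∑ i, ∑ j, v i * w i j * h j)
    (Z : ℝ)
    (hZ : Z = ∑ p : (V → Bool) × (H → Bool),
      Real.exp (-(E (fun i => if p.1 i then 1 else 0)
        (fun j => if p.2 j then 1 else 0))))
    (P : (V → ℝ) → (H → ℝ) → ℝ)
    (hP : ∀ v h, P v h = Real.exp (-(E v h)) / Z)
    (σ : ℝ → ℝ) (hσ : ∀ x, σ x = 1 / (1 + Real.exp (-x)))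
    (h : H → ℝ) (hh : ∀ j, h j = 0 ∨ h j = 1) (i : V) :
    (∑ v ∈ Finset.univ.filter (fun v : V → Bool => v i = true),
        P (fun k => if v k then 1 else 0) h) /
      (∑ v : V → Bool, P (fun k => if v k then 1 else 0) h)
      = σ (b i + ∑ j, w i j * h j) := by
  classical
  set a : ℝ := b i + ∑ j, w i j * h j with ha
  set F : (V → Bool) → ℝ := fun v => Real.exp (-(E (fun k => if v k then 1 else 0) h))
    with hFdef
  have hZpos : 0 < Z := by
    rw [hZ]
    exact Finset.sum_pos (fun p _ => Real.exp_pos _)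
      ⟨⟨fun _ => false, fun _ => false⟩, Finset.mem_univ _⟩
  have hPF : ∀ v : V → Bool, P (fun k => if v k then 1 else 0) h = F v / Z :=
    fun v => hP _ _
  -- exponent formula
  have hexp : ∀ v : V → Bool, -(E (fun k => if v k then 1 else 0) h)
      = (∑ j, c j * h j) +
        ∑ k, (if v k then (1:ℝ) else 0) * (b k + ∑ j, w k j * h j) := by
    intro v
    rw [hE]
    have hsplit : ∑ k, (if v k then (1:ℝ) else 0) * (b k + ∑ j, w k j * h j)
        = (∑ k, b k * (if v k then (1:ℝ) else 0))
          + ∑ k, ∑ j, (if v k then (1:ℝ) else 0) * w k j * h j := by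
      rw [← Finset.sum_add_distrib]
      refine Finset.sum_congr rfl fun k _ => ?_
      rw [mul_add, Finset.mul_sum]
      congr 1
      · ring
      · exact Finset.sum_congr rfl fun j _ => by ring
    rw [hsplit]
    ring
  -- key flip identity
  have key : ∀ v : V → Bool,
      F (Function.update v i true) = Real.exp a * F (Function.update v i false) := by
    intro v
    rw [hFdef]
    simp only
    rw [hexp, hexp, ← Real.exp_add]
    congr 1
    have h1 : ∀ (t : Bool), ∑ k, (if Function.update v i t k then (1:ℝ) else 0) *
        (b k + ∑ j, w k j * h j)
        = (if t then (1:ℝ) else 0) * (b i + ∑ j, w i j * h j)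
          + ∑ k ∈ Finset.univ.erase i,
            (if v k then (1:ℝ) else 0) * (b k + ∑ j, w k j * h j) := by
      intro t
      rw [← Finset.add_sum_erase _ _ (Finset.mem_univ i)]
      congr 1
      · rw [Function.update_self]
      · exact Finset.sum_congr rfl (fun k hk => by
          rw [Function.update_of_ne (Finset.mem_erase.mp hk).1])
    rw [h1, h1]
    simp
    ring
  -- sums
  set S0 : ℝ := ∑ v ∈ Finset.univ.filter (fun v : V → Bool => ¬ v i = true), F v with hS0
  set S1 : ℝ := ∑ v ∈ Finset.univ.filter (fun v : V → Bool => v i = true), F v with hS1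
  have hS1eq : S1 = Real.exp a * S0 := by
    rw [hS1, hS0, Finset.mul_sum]
    refine Finset.sum_bij' (fun v _ => Function.update v i false)
      (fun v _ => Function.update v i true) ?_ ?_ ?_ ?_ ?_
    · intro v hv
      simp [Function.update_self]
    · intro v hv
      simp [Function.update_self]
    · intro v hv
      simp only [Finset.mem_filter, Finset.mem_univ, true_and] at hv
      funext k
      by_cases hk : k = i
      · subst hk; simp [Function.update_self, hv]
      · simp [Function.update_of_ne hk]
    · intro v hv
      simp only [Finset.mem_filter, Finset.mem_univ, true_and] at hv
      funext k
      by_cases hk : k = i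
      · subst hk
        simp only [Function.update_self]
        simp at hv
        exact hv.symm
      · simp [Function.update_of_ne hk]
    · intro v hv
      simp only [Finset.mem_filter, Finset.mem_univ, true_and] at hv
      have := key v
      rw [show Function.update v i true = v from by
        funext k; by_cases hk : k = i
        · subst hk; simp [Function.update_self, hv]
        · simp [Function.update_of_ne hk]] at this
      exact this
  have hS0pos : 0 < S0 := by
    rw [hS0]
    refine Finset.sum_pos (fun v _ => Real.exp_pos _) ?_
    exact ⟨fun _ => false, by simp⟩
  have hdenom : (∑ v : V → Bool, P (fun k => if v k then 1 else 0) h) = (S1 + S0) / Z := by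
    rw [Finset.sum_congr rfl (fun v _ => hPF v), ← Finset.sum_div]
    congr 1
    rw [hS1, hS0, Finset.sum_filter_add_sum_filter_not]
  have hnum : (∑ v ∈ Finset.univ.filter (fun v : V → Bool => v i = true),
      P (fun k => if v k then 1 else 0) h) = S1 / Z := by
    rw [Finset.sum_congr rfl (fun v _ => hPF v), ← Finset.sum_div, hS1]
  rw [hnum, hdenom, hσ, hS1eq, Real.exp_neg]
  have he : Real.exp a ≠ 0 := (Real.exp_pos a).ne'
  have hS0ne : S0 ≠ 0 := hS0pos.ne'
  have hZne : Z ≠ 0 := hZpos.ne'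
  have hsum : Real.exp a * S0 + S0 ≠ 0 := by positivity
  field_simp
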